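/- There exist constants 0 < c(p) ≤ C(p), depending only on p and independent of k and of the choices of the intervals I(J), such that for every K ∈ 𝐊: c(p)·3^k·w_k(K) ≤ Σ_{K' ∈ 𝐊, K' ⊆ K} w_k(K') ≤ C(p)·3^k·w_k(K) and c(p)·σ_k(K) ≤ Σ_{K' ∈ 𝐊, K' ⊆ K} σ_k(K') ≤ C(p)·σ_k(K). -/

import Mathlib

open MeasureTheory Set Filter

noncomputable section

namespace RTpaper

/-- The half-open interval `[a, b)` represented by the pair `(a, b)`. -/
def ivSet (I : ℝ × ℝ) : Set ℝ := Set.Ico I.1 I.2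

/-- The length of the interval represented by `I`. -/
def len (I : ℝ × ℝ) : ℝ := I.2 - I.1

/-- The middle triadic child of an interval. -/
def mid (I : ℝ × ℝ) : ℝ × ℝ := (I.1 + (I.2 - I.1) / 3, I.2 - (I.2 - I.1) / 3)

/-- The families `𝐊ᵢ` of the Reguera–Thiele construction. -/
def Kfam (k : ℕ) : ℕ → Set (ℝ × ℝ)
  | 0 => {((0 : ℝ), (1 : ℝ))}
  | (i + 1) =>
      {I | ∃ K ∈ Kfam k i, ∃ j : ℕ, j < 3 ^ (k - 1) ∧
        I = ((mid K).1 + (j : ℝ) * ((3 : ℝ) ^ (1 - (k : ℤ)) * len (mid K)),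
             (mid K).1 + ((j : ℝ) + 1) * ((3 : ℝ) ^ (1 - (k : ℤ)) * len (mid K)))}

/-- The families `𝐉ᵢ` (of interest for `i ≥ 1`). -/
def Jfam (k i : ℕ) : Set (ℝ × ℝ) := {J | ∃ K ∈ Kfam k (i - 1), J = mid K}

/-- The family `𝐊 = ⋃ᵢ 𝐊ᵢ`. -/
def KK (k : ℕ) : Set (ℝ × ℝ) := ⋃ i, Kfam k i

/-- The family `𝐉 = ⋃_{i ≥ 1} 𝐉ᵢ`. -/
def JJ (k : ℕ) : Set (ℝ × ℝ) := ⋃ i, Jfam k (i + 1)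

/-- The chosen triadic interval `I(J)` adjacent to `J` of length `3^{1-k}|J|`, encoded by a
choice function `ch` deciding, for each `J`, whether `I(J)` lies to the right (`true`) or to
the left (`false`) of `J`. -/
def IJ (k : ℕ) (ch : ℝ × ℝ → Bool) (J : ℝ × ℝ) : ℝ × ℝ :=
  if ch J then (J.2, J.2 + (3 : ℝ) ^ (1 - (k : ℤ)) * len J)
  else (J.1 - (3 : ℝ) ^ (1 - (k : ℤ)) * len J, J.1)

/-- The weight `w_k = Σ_{i ≥ 1} Σ_{J ∈ 𝐉ᵢ} (3^k/(3^{k-1}+1))^i · 1_{I(J)}`. -/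
def wgt (k : ℕ) (ch : ℝ × ℝ → Bool) (x : ℝ) : ℝ :=
  ∑' i : ℕ, ∑' J : ↥(Jfam k (i + 1)),
    Set.indicator (ivSet (IJ k ch (J : ℝ × ℝ)))
      (fun _ => ((3 : ℝ) ^ k / ((3 : ℝ) ^ (k - 1) + 1)) ^ (i + 1)) x

/-- The weight `σ_k = w_k^{1-p}` on `{w_k > 0}`, and `0` elsewhere. -/
def sgm (p : ℝ) (k : ℕ) (ch : ℝ × ℝ → Bool) (x : ℝ) : ℝ :=
  if 0 < wgt k ch x then wgt k ch x ^ (1 - p) else 0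

/-- `u(I) = ∫_I u`. -/
def mass (u : ℝ → ℝ) (I : ℝ × ℝ) : ℝ := ∫ x in ivSet I, u x

/-- `⟨u⟩_I = u(I)/|I|`. -/
def avg (u : ℝ → ℝ) (I : ℝ × ℝ) : ℝ := mass u I / len I

/-- `ch_𝐊(K)`: the members of `𝐊_{i+1}` contained in `K ∈ 𝐊ᵢ`. -/
def chK (k : ℕ) (K : ℝ × ℝ) : Set (ℝ × ℝ) :=
  {K' | ∃ i, K ∈ Kfam k i ∧ K' ∈ Kfam k (i + 1) ∧ ivSet K' ⊆ ivSet K}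

/-- Triadic intervals of `ℝ`. -/
def IsTriadic (I : ℝ × ℝ) : Prop :=
  ∃ n j : ℤ, I.1 = (j : ℝ) * (3 : ℝ) ^ (-n) ∧ I.2 = ((j : ℝ) + 1) * (3 : ℝ) ^ (-n)

/-- Maximal members of `S` strictly contained in `R`. -/
def maxIn (S : Set (ℝ × ℝ)) (R : ℝ × ℝ) : Set (ℝ × ℝ) :=
  {Q | Q ∈ S ∧ ivSet Q ⊂ ivSet R ∧
    ∀ Q' ∈ S, ivSet Q ⊆ ivSet Q' → ivSet Q' ⊂ ivSet R → ivSet Q' = ivSet Q}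

/-- Martingale `ε`-sparse families of (half-open) intervals. -/
def MSparse (ε : ℝ) (S : Set (ℝ × ℝ)) : Prop :=
  S.Countable ∧ (∀ I ∈ S, I.1 < I.2) ∧
    (∀ I ∈ S, ∀ J ∈ S, ivSet I ⊆ ivSet J ∨ ivSet J ⊆ ivSet I ∨ ivSet I ∩ ivSet J = ∅) ∧
    ∀ R ∈ S, (∑' Q : ↥(maxIn S R), len (Q : ℝ × ℝ)) ≤ ε * len R

/-- `Σ_{I ∈ F} ⟨u⟩_I^q · ⟨v⟩_I · |I|`. -/
def sumTest (q : ℝ) (u v : ℝ → ℝ) (F : Set (ℝ × ℝ)) : ℝ :=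
  ∑' I : ↥F, avg u (I : ℝ × ℝ) ^ q * avg v (I : ℝ × ℝ) * len (I : ℝ × ℝ)


section Struct

variable {k : ℕ}

lemma len_mid (K : ℝ × ℝ) : len (mid K) = len K / 3 := by
  simp [len, mid]; ring

lemma three_zpow (hk : 1 ≤ k) : (3 : ℝ) ^ (1 - (k : ℤ)) = 3 * ((3:ℝ) ^ k)⁻¹ := by
  rw [zpow_sub₀ (by norm_num : (3:ℝ) ≠ 0)]
  simp [zpow_natCast]
  ring

lemma pow_pred (hk : 1 ≤ k) : (3:ℝ) ^ (k - 1) * 3 = (3:ℝ) ^ k := by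
  rw [← pow_succ, Nat.sub_add_cancel hk]

/-- the width of children of `K`. -/
lemma child_width (hk : 1 ≤ k) (K : ℝ × ℝ) :
    (3 : ℝ) ^ (1 - (k : ℤ)) * len (mid K) = ((3:ℝ)^k)⁻¹ * len K := by
  rw [three_zpow hk, len_mid]; ring

lemma len_Kfam (hk : 1 ≤ k) : ∀ i, ∀ K ∈ Kfam k i, len K = (((3:ℝ)^k)⁻¹) ^ i := by
  intro i
  induction i with
  | zero => rintro K hK; simp [Kfam] at hK; subst hK; simp [len]
  | succ i ih =>
    rintro K' ⟨K, hK, j, hj, rfl⟩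
    have hlen : len ((mid K).1 + (j : ℝ) * ((3 : ℝ) ^ (1 - (k : ℤ)) * len (mid K)),
        (mid K).1 + ((j : ℝ) + 1) * ((3 : ℝ) ^ (1 - (k : ℤ)) * len (mid K)))
        = (3 : ℝ) ^ (1 - (k : ℤ)) * len (mid K) := by
      simp only [len]; ring
    rw [hlen, child_width hk, ih K hK, pow_succ]; ring

lemma len_Kfam_pos (hk : 1 ≤ k) {i : ℕ} {K : ℝ × ℝ} (hK : K ∈ Kfam k i) : 0 < len K := by
  rw [len_Kfam hk i K hK]; positivity

lemma Kfam_lt (hk : 1 ≤ k) {i : ℕ} {K : ℝ × ℝ} (hK : K ∈ Kfam k i) : K.1 < K.2 := by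
  have := len_Kfam_pos hk hK; simp only [len] at this; linarith

lemma mid_subset {K : ℝ × ℝ} : ivSet (mid K) ⊆ ivSet K := by
  intro x hx
  simp only [ivSet, mid, Set.mem_Ico] at hx ⊢
  constructor
  · nlinarith [hx.1, hx.2]
  · nlinarith [hx.1, hx.2]

lemma child_mem {i : ℕ} {K : ℝ × ℝ} (hK : K ∈ Kfam k i) {j : ℕ} (hj : j < 3 ^ (k-1)) :
    ((mid K).1 + (j : ℝ) * ((3 : ℝ) ^ (1 - (k : ℤ)) * len (mid K)),
     (mid K).1 + ((j : ℝ) + 1) * ((3 : ℝ) ^ (1 - (k : ℤ)) * len (mid K))) ∈ Kfam k (i+1) :=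
  ⟨K, hK, j, hj, rfl⟩

lemma child_subset_mid (hk : 1 ≤ k) {i : ℕ} {K : ℝ × ℝ} (hK : K ∈ Kfam k i)
    {j : ℕ} (hj : j < 3 ^ (k-1)) :
    ivSet ((mid K).1 + (j : ℝ) * ((3 : ℝ) ^ (1 - (k : ℤ)) * len (mid K)),
     (mid K).1 + ((j : ℝ) + 1) * ((3 : ℝ) ^ (1 - (k : ℤ)) * len (mid K))) ⊆ ivSet (mid K) := by
  have hL : 0 < len K := len_Kfam_pos hk hK
  have hw : (3 : ℝ) ^ (1 - (k : ℤ)) * len (mid K) = ((3:ℝ)^k)⁻¹ * len K := child_width hk K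
  have h3 : (0:ℝ) < ((3:ℝ)^k)⁻¹ := by positivity
  have hj' : ((j:ℝ) + 1) ≤ (3:ℝ)^(k-1) := by
    have : (j:ℝ) + 1 ≤ ((3^(k-1) : ℕ) : ℝ) := by exact_mod_cast Nat.succ_le_of_lt hj
    simpa using this
  have hend : ((j:ℝ) + 1) * (((3:ℝ)^k)⁻¹ * len K) ≤ len K / 3 := by
    have h1 : ((j:ℝ)+1) * (((3:ℝ)^k)⁻¹ * len K) ≤ (3:ℝ)^(k-1) * (((3:ℝ)^k)⁻¹ * len K) := by
      apply mul_le_mul_of_nonneg_right hj' (by positivity)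
    have h2 : (3:ℝ)^(k-1) * (((3:ℝ)^k)⁻¹ * len K) = len K / 3 := by
      have := pow_pred hk
      field_simp
      nlinarith [this]
    linarith
  intro x hx
  simp only [ivSet, Set.mem_Ico] at hx ⊢
  rw [hw] at hx
  constructor
  · have : (0:ℝ) ≤ (j:ℝ) * (((3:ℝ)^k)⁻¹ * len K) := by positivity
    linarith [hx.1]
  · have h2 : (mid K).2 = (mid K).1 + len K / 3 := by
      simp only [mid, len]; ring
    rw [h2]
    linarith [hx.2]
lemma Ico_tiling (s w : ℝ) : ∀ N : ℕ, Set.Ico s (s + N*w) = ⋃ j ∈ Finset.range N, Set.Ico (s + j*w) (s + (j+1)*w)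
  | 0 => by simp
  | (N+1) => by
    rcases le_or_gt w 0 with hw | hw
    · have h0 : ∀ M : ℕ, Set.Ico s (s + M*w) = ∅ := by
        intro M
        apply Set.Ico_eq_empty
        intro h
        nlinarith [h, (by positivity : (0:ℝ) ≤ (M:ℝ))]
      rw [h0]
      symm
      simp only [Set.eq_empty_iff_forall_notMem]
      intro x hx
      simp only [Set.mem_iUnion, Set.mem_Ico] at hx
      obtain ⟨j, _, h1, h2⟩ := hx
      nlinarith
    · have key : s ≤ s + (N:ℝ)*w := by nlinarith [(by positivity : (0:ℝ) ≤ (N:ℝ))]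
      have key2 : s + (N:ℝ)*w ≤ s + ((N:ℕ)+1:ℕ)*w := by push_cast; nlinarith
      rw [← Set.Ico_union_Ico_eq_Ico key key2, Ico_tiling s w N, Finset.range_add_one]
      rw [Finset.set_biUnion_insert]
      rw [Set.union_comm]
      congr 1
      push_cast
      ring_nf

lemma mid_right (K : ℝ × ℝ) : (mid K).2 = (mid K).1 + len K / 3 := by
  simp only [mid, len]; ring

lemma mid_eq_union_children (hk : 1 ≤ k) {i : ℕ} {K : ℝ × ℝ} (hK : K ∈ Kfam k i) :
    ivSet (mid K) = ⋃ j ∈ Finset.range (3^(k-1)),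
      ivSet ((mid K).1 + (j : ℝ) * ((3 : ℝ) ^ (1 - (k : ℤ)) * len (mid K)),
        (mid K).1 + ((j : ℝ) + 1) * ((3 : ℝ) ^ (1 - (k : ℤ)) * len (mid K))) := by
  have hw : (3 : ℝ) ^ (1 - (k : ℤ)) * len (mid K) = ((3:ℝ)^k)⁻¹ * len K := child_width hk K
  have hNw : ((3^(k-1) : ℕ) : ℝ) * ((3 : ℝ) ^ (1 - (k : ℤ)) * len (mid K)) = len K / 3 := by
    rw [hw]
    push_cast
    have := pow_pred hk
    field_simp
    linear_combination len K * this
  have : ivSet (mid K) = Set.Ico ((mid K).1) ((mid K).1 + ((3^(k-1):ℕ):ℝ) * ((3 : ℝ) ^ (1 - (k : ℤ)) * len (mid K))) := by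
    rw [hNw, ← mid_right]; rfl
  rw [this, Ico_tiling]
  apply Set.iUnion_congr; intro j
  apply Set.iUnion_congr; intro _
  simp only [ivSet]

lemma Kfam_pairwise_disjoint (hk : 1 ≤ k) :
    ∀ i, ∀ K₁ ∈ Kfam k i, ∀ K₂ ∈ Kfam k i, K₁ ≠ K₂ → Disjoint (ivSet K₁) (ivSet K₂) := by
  intro i
  induction i with
  | zero =>
    rintro K₁ h1 K₂ h2 hne
    simp only [Kfam, Set.mem_singleton_iff] at h1 h2
    exact absurd (h1.trans h2.symm) hne
  | succ i ih =>
    rintro K₁ ⟨P₁, hP₁, j₁, hj₁, rfl⟩ K₂ ⟨P₂, hP₂, j₂, hj₂, rfl⟩ hne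
    by_cases hP : P₁ = P₂
    · subst hP
      have hwpos : 0 < (3 : ℝ) ^ (1 - (k : ℤ)) * len (mid P₁) := by
        rw [child_width hk]
        have := len_Kfam_pos hk hP₁
        positivity
      have hjne : j₁ ≠ j₂ := by
        rintro rfl; exact hne rfl
      set w := (3 : ℝ) ^ (1 - (k : ℤ)) * len (mid P₁) with hwdef
      simp only [ivSet]
      rw [Set.Ico_disjoint_Ico]
      rcases Nat.lt_or_ge j₁ j₂ with h | h
      · have : ((j₁:ℝ)+1) ≤ (j₂:ℝ) := by exact_mod_cast Nat.succ_le_of_lt h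
        apply le_max_of_le_right
        apply min_le_of_left_le
        nlinarith
      · have hlt : j₂ < j₁ := lt_of_le_of_ne h (Ne.symm hjne)
        have : ((j₂:ℝ)+1) ≤ (j₁:ℝ) := by exact_mod_cast Nat.succ_le_of_lt hlt
        apply le_max_of_le_left
        apply min_le_of_right_le
        nlinarith
    · have hdisj := ih P₁ hP₁ P₂ hP₂ hP
      apply Set.disjoint_of_subset _ _ hdisj
      · exact (child_subset_mid hk hP₁ hj₁).trans mid_subset
      · exact (child_subset_mid hk hP₂ hj₂).trans mid_subset

lemma Kfam_succ_subset_mid (hk : 1 ≤ k) {i : ℕ} {K' : ℝ × ℝ} (h : K' ∈ Kfam k (i+1)) :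
    ∃ P ∈ Kfam k i, ivSet K' ⊆ ivSet (mid P) := by
  obtain ⟨P, hP, j, hj, rfl⟩ := h
  exact ⟨P, hP, child_subset_mid hk hP hj⟩

lemma Kfam_descend (hk : 1 ≤ k) :
    ∀ d i, ∀ K' ∈ Kfam k (i+d+1), ∃ P ∈ Kfam k i, ivSet K' ⊆ ivSet (mid P) := by
  intro d
  induction d with
  | zero => intro i K' h; exact Kfam_succ_subset_mid hk h
  | succ d ih =>
    intro i K' h
    have h' : K' ∈ Kfam k ((i+d+1)+1) := h
    obtain ⟨Q, hQ, hsub⟩ := Kfam_succ_subset_mid hk h'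
    obtain ⟨P, hP, hsub2⟩ := ih i Q hQ
    exact ⟨P, hP, hsub.trans (mid_subset.trans hsub2)⟩

lemma Kfam_nested (hk : 1 ≤ k) {i i' : ℕ} (h : i ≤ i') {K K' : ℝ × ℝ}
    (hK : K ∈ Kfam k i) (hK' : K' ∈ Kfam k i') :
    ivSet K' ⊆ ivSet K ∨ Disjoint (ivSet K') (ivSet K) := by
  rcases eq_or_lt_of_le h with rfl | hlt
  · by_cases he : K' = K
    · subst he; exact Or.inl subset_rfl
    · exact Or.inr (Kfam_pairwise_disjoint hk i K' hK' K hK he)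
  · have : K' ∈ Kfam k (i + (i' - i - 1) + 1) := by convert hK' using 2; omega
    obtain ⟨P, hP, hsub⟩ := Kfam_descend hk _ i K' this
    by_cases he : P = K
    · subst he; exact Or.inl (hsub.trans mid_subset)
    · exact Or.inr (Set.disjoint_of_subset (hsub.trans mid_subset) subset_rfl
        (Kfam_pairwise_disjoint hk i P hP K hK he))
variable {ch : ℝ × ℝ → Bool}

lemma IJ_disj_mid (k : ℕ) (ch : ℝ × ℝ → Bool) (K : ℝ × ℝ) :
    Disjoint (ivSet (IJ k ch (mid K))) (ivSet (mid K)) := by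
  unfold IJ
  split
  · simp only [ivSet]
    rw [Set.Ico_disjoint_Ico]
    exact le_trans (min_le_right _ _) (le_max_left _ _)
  · simp only [ivSet]
    rw [Set.Ico_disjoint_Ico]
    exact le_trans (min_le_left _ _) (le_max_right _ _)

lemma len_IJ (hk : 1 ≤ k) (K : ℝ × ℝ) :
    len (IJ k ch (mid K)) = ((3:ℝ)^k)⁻¹ * len K := by
  have h := child_width hk K
  unfold IJ
  split <;> simp only [len] at h ⊢ <;> linarith

lemma IJ_subset (hk : 1 ≤ k) {i : ℕ} {K : ℝ × ℝ} (hK : K ∈ Kfam k i) :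
    ivSet (IJ k ch (mid K)) ⊆ ivSet K := by
  have hL : 0 < len K := len_Kfam_pos hk hK
  have hd : (3 : ℝ) ^ (1 - (k : ℤ)) * len (mid K) = ((3:ℝ)^k)⁻¹ * len K := child_width hk K
  have h13 : ((3:ℝ)^k)⁻¹ ≤ 1/3 := by
    rw [inv_le_comm₀ (by positivity) (by norm_num)]
    calc (1/3 : ℝ)⁻¹ = 3^1 := by norm_num
    _ ≤ 3^k := by apply pow_le_pow_right₀ (by norm_num) hk
  have hdle : (3 : ℝ) ^ (1 - (k : ℤ)) * ((mid K).2 - (mid K).1) ≤ (K.2 - K.1) / 3 := by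
    have h1 : (3 : ℝ) ^ (1 - (k : ℤ)) * ((mid K).2 - (mid K).1) = ((3:ℝ)^k)⁻¹ * (K.2 - K.1) := by
      simpa [len] using hd
    rw [h1]
    simp only [len] at hL
    nlinarith
  have hL' : 0 < K.2 - K.1 := by simpa [len] using hL
  have hdpos : 0 < (3 : ℝ) ^ (1 - (k : ℤ)) * ((mid K).2 - (mid K).1) := by
    have h1 : (3 : ℝ) ^ (1 - (k : ℤ)) * ((mid K).2 - (mid K).1) = ((3:ℝ)^k)⁻¹ * (K.2 - K.1) := by
      simpa [len] using hd
    rw [h1]; positivity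
  have hm1 : (mid K).1 = K.1 + (K.2 - K.1)/3 := by simp [mid]
  have hm2 : (mid K).2 = K.2 - (K.2 - K.1)/3 := by simp [mid]
  unfold IJ
  split <;> intro x hx <;> simp only [ivSet, Set.mem_Ico, len] at hx ⊢ <;>
    rw [hm1, hm2] at hx hdle hdpos <;> constructor
  · linarith [hx.1]
  · linarith [hx.2]
  · linarith [hx.1]
  · linarith [hx.2]

lemma Kfam_finite : ∀ i, (Kfam k i).Finite := by
  intro i
  induction i with
  | zero => exact Set.finite_singleton _
  | succ i ih =>
    have h2 : (Set.image2
        (fun (K : ℝ × ℝ) (j : ℕ) => ((mid K).1 + (j : ℝ) * ((3 : ℝ) ^ (1 - (k : ℤ)) * len (mid K)),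
          (mid K).1 + ((j : ℝ) + 1) * ((3 : ℝ) ^ (1 - (k : ℤ)) * len (mid K))))
        (Kfam k i) (Set.Iio (3^(k-1) : ℕ))).Finite :=
      Set.Finite.image2 _ ih (Set.finite_Iio _)
    apply h2.subset
    rintro K' ⟨K, hK, j, hj, rfl⟩
    exact Set.mem_image2_of_mem hK hj

lemma Jfam_eq (k i : ℕ) : Jfam k (i+1) = mid '' (Kfam k i) := by
  ext J
  simp only [Jfam, Nat.add_sub_cancel, Set.mem_image, Set.mem_setOf_eq]
  constructor
  · rintro ⟨K, hK, rfl⟩; exact ⟨K, hK, rfl⟩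
  · rintro ⟨K, hK, rfl⟩; exact ⟨K, hK, rfl⟩

lemma Jfam_finite (k i : ℕ) : (Jfam k (i+1)).Finite := by
  rw [Jfam_eq]; exact (Kfam_finite i).image _

/-- Unique support: if `x ∈ P \ mid P` with `P ∈ 𝐊_m`, the only indicator that may be
nonzero at `x` is the one of `I(mid P)`. -/
lemma support_unique (hk : 1 ≤ k) {m : ℕ} {P : ℝ × ℝ} (hP : P ∈ Kfam k m) {x : ℝ}
    (hx1 : x ∈ ivSet P) (hx2 : x ∉ ivSet (mid P)) {i : ℕ} {J : ℝ × ℝ}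
    (hJ : J ∈ Jfam k (i+1)) (hxJ : x ∈ ivSet (IJ k ch J)) : i = m ∧ J = mid P := by
  rw [Jfam_eq] at hJ
  obtain ⟨Q, hQ, rfl⟩ := hJ
  have hxQ : x ∈ ivSet Q := IJ_subset hk hQ hxJ
  rcases lt_trichotomy i m with hlt | heq | hgt
  · -- i < m : impossible
    exfalso
    have hPm : P ∈ Kfam k (i + (m - i - 1) + 1) := by
      rw [show i + (m-i-1) + 1 = m from by omega]; exact hP
    obtain ⟨R, hR, hsub⟩ := Kfam_descend hk _ i P hPm
    have hxR : x ∈ ivSet (mid R) := hsub hx1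
    have hQR : Q = R := by
      by_contra hne
      exact (Kfam_pairwise_disjoint hk i Q hQ R hR hne).ne_of_mem hxQ (mid_subset hxR) rfl
    subst hQR
    exact (IJ_disj_mid k ch Q).ne_of_mem hxJ hxR rfl
  · -- i = m
    subst heq
    have hQP : Q = P := by
      by_contra hne
      exact (Kfam_pairwise_disjoint hk i Q hQ P hP hne).ne_of_mem hxQ hx1 rfl
    exact ⟨rfl, by rw [hQP]⟩
  · -- i > m : impossible
    exfalso
    have hQm : Q ∈ Kfam k (m + (i - m - 1) + 1) := by
      rw [show m + (i-m-1) + 1 = i from by omega]; exact hQ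
    obtain ⟨R, hR, hsub⟩ := Kfam_descend hk _ m Q hQm
    have hxR : x ∈ ivSet (mid R) := hsub hxQ
    have hRP : R = P := by
      by_contra hne
      exact (Kfam_pairwise_disjoint hk m R hR P hP hne).ne_of_mem (mid_subset hxR) hx1 rfl
    subst hRP
    exact hx2 hxR
/-- The base `a = 3^k/(3^{k-1}+1)`. -/
def abase (k : ℕ) : ℝ := (3 : ℝ) ^ k / ((3 : ℝ) ^ (k - 1) + 1)

lemma abase_pos : 0 < abase k := by unfold abase; positivity

lemma wgt_nonneg (k : ℕ) (ch : ℝ × ℝ → Bool) (x : ℝ) : 0 ≤ wgt k ch x := by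
  apply tsum_nonneg
  intro i
  apply tsum_nonneg
  intro J
  apply Set.indicator_nonneg
  intro _ _
  positivity

lemma wgt_eq_on (hk : 1 ≤ k) {m : ℕ} {P : ℝ × ℝ} (hP : P ∈ Kfam k m) {x : ℝ}
    (hx1 : x ∈ ivSet P) (hx2 : x ∉ ivSet (mid P)) :
    wgt k ch x = Set.indicator (ivSet (IJ k ch (mid P))) (fun _ => (abase k) ^ (m+1)) x := by
  have hmem : mid P ∈ Jfam k (m+1) := by rw [Jfam_eq]; exact ⟨P, hP, rfl⟩
  unfold wgt
  rw [tsum_eq_single m]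
  · rw [tsum_eq_single (⟨mid P, hmem⟩ : ↥(Jfam k (m+1)))]
    · rfl
    · intro J' hne
      apply Set.indicator_of_notMem
      intro hxJ
      obtain ⟨-, hJ⟩ := support_unique hk hP hx1 hx2 J'.2 hxJ
      exact hne (Subtype.ext hJ)
  · intro i hne
    have hz : ∀ J : ↥(Jfam k (i+1)),
        Set.indicator (ivSet (IJ k ch (J : ℝ × ℝ)))
          (fun _ => ((3 : ℝ) ^ k / ((3 : ℝ) ^ (k - 1) + 1)) ^ (i + 1)) x = 0 := by
      intro J
      apply Set.indicator_of_notMem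
      intro hxJ
      obtain ⟨him, -⟩ := support_unique hk hP hx1 hx2 J.2 hxJ
      exact hne him
    calc ∑' J : ↥(Jfam k (i+1)), Set.indicator (ivSet (IJ k ch (J : ℝ × ℝ)))
          (fun _ => ((3 : ℝ) ^ k / ((3 : ℝ) ^ (k - 1) + 1)) ^ (i + 1)) x
        = ∑' J : ↥(Jfam k (i+1)), (0:ℝ) := tsum_congr hz
      _ = 0 := tsum_zero

/-- inner sum of the weight -/
def wgtI (k : ℕ) (ch : ℝ × ℝ → Bool) (i : ℕ) (x : ℝ) : ℝ :=
  ∑' J : ↥(Jfam k (i + 1)),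
    Set.indicator (ivSet (IJ k ch (J : ℝ × ℝ)))
      (fun _ => ((3 : ℝ) ^ k / ((3 : ℝ) ^ (k - 1) + 1)) ^ (i + 1)) x

lemma wgtI_nonneg (k : ℕ) (ch : ℝ × ℝ → Bool) (i : ℕ) (x : ℝ) : 0 ≤ wgtI k ch i x := by
  apply tsum_nonneg
  intro J
  apply Set.indicator_nonneg
  intro _ _
  positivity

lemma wgtI_measurable (k : ℕ) (ch : ℝ × ℝ → Bool) (i : ℕ) : Measurable (wgtI k ch i) := by
  haveI : Fintype ↥(Jfam k (i+1)) := (Jfam_finite k i).fintype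
  have : wgtI k ch i = fun x => ∑ J : ↥(Jfam k (i+1)),
      Set.indicator (ivSet (IJ k ch (J : ℝ × ℝ)))
        (fun _ => ((3 : ℝ) ^ k / ((3 : ℝ) ^ (k - 1) + 1)) ^ (i + 1)) x := by
    funext x
    exact tsum_fintype _
  rw [this]
  apply Finset.measurable_sum
  intro J _
  exact Measurable.indicator measurable_const measurableSet_Ico

lemma wgt_eq_toReal (k : ℕ) (ch : ℝ × ℝ → Bool) :
    wgt k ch = fun x => (∑' i : ℕ, ENNReal.ofReal (wgtI k ch i x)).toReal := by
  funext x
  by_cases hs : Summable (fun i => wgtI k ch i x)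
  · rw [← ENNReal.ofReal_tsum_of_nonneg (fun i => wgtI_nonneg k ch i x) hs]
    rw [ENNReal.toReal_ofReal (tsum_nonneg (fun i => wgtI_nonneg k ch i x))]
    rfl
  · have h1 : wgt k ch x = 0 := tsum_eq_zero_of_not_summable hs
    have h2 : (∑' i : ℕ, ENNReal.ofReal (wgtI k ch i x)) = ⊤ := by
      by_contra hne
      apply hs
      have := ENNReal.summable_toReal hne
      convert this using 1
      funext i
      rw [ENNReal.toReal_ofReal (wgtI_nonneg k ch i x)]
    rw [h1, h2]
    simp

lemma wgt_measurable (k : ℕ) (ch : ℝ × ℝ → Bool) : Measurable (wgt k ch) := by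
  rw [wgt_eq_toReal]
  apply Measurable.ennreal_toReal
  exact Measurable.ennreal_tsum (fun i => (wgtI_measurable k ch i).ennreal_ofReal)

lemma sgm_nonneg (p : ℝ) (k : ℕ) (ch : ℝ × ℝ → Bool) (x : ℝ) : 0 ≤ sgm p k ch x := by
  unfold sgm
  split
  · positivity
  · exact le_refl 0

lemma sgm_measurable (p : ℝ) (k : ℕ) (ch : ℝ × ℝ → Bool) : Measurable (sgm p k ch) := by
  unfold sgm
  have heq : (fun x => if 0 < wgt k ch x then wgt k ch x ^ (1 - p) else 0)
      = fun x => if 0 < wgt k ch x then Real.exp (Real.log (wgt k ch x) * (1 - p)) else 0 := by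
    funext x
    split
    · rw [Real.rpow_def_of_pos (by assumption)]
    · rfl
  rw [heq]
  apply Measurable.ite
  · exact measurableSet_lt measurable_const (wgt_measurable k ch)
  · exact Real.measurable_exp.comp ((Real.measurable_log.comp (wgt_measurable k ch)).mul_const _)
  · exact measurable_const

lemma sgm_eq_on (hp : 1 < p) (hk : 1 ≤ k) {m : ℕ} {P : ℝ × ℝ} (hP : P ∈ Kfam k m) {x : ℝ}
    (hx1 : x ∈ ivSet P) (hx2 : x ∉ ivSet (mid P)) :
    sgm p k ch x = Set.indicator (ivSet (IJ k ch (mid P)))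
      (fun _ => ((abase k) ^ (1-p)) ^ (m+1)) x := by
  have hw := wgt_eq_on hk hP hx1 hx2 (ch := ch)
  have ha : (0:ℝ) < abase k := abase_pos
  unfold sgm
  by_cases hxI : x ∈ ivSet (IJ k ch (mid P))
  · rw [Set.indicator_of_mem hxI] at hw
    rw [Set.indicator_of_mem hxI, hw, if_pos (by positivity)]
    rw [← Real.rpow_natCast (abase k) (m+1), ← Real.rpow_natCast (abase k ^ (1-p)) (m+1),
      ← Real.rpow_mul ha.le, ← Real.rpow_mul ha.le]
    ring_nf
  · rw [Set.indicator_of_notMem hxI] at hw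
    rw [Set.indicator_of_notMem hxI, hw, if_neg (lt_irrefl 0)]
/-- members of `𝐊_{i+n}` inside `K`. -/
def lev (k i : ℕ) (K : ℝ × ℝ) (n : ℕ) : Set (ℝ × ℝ) :=
  {P | P ∈ Kfam k (i+n) ∧ ivSet P ⊆ ivSet K}

def Aset (k i : ℕ) (K : ℝ × ℝ) (n : ℕ) : Set ℝ :=
  ⋃ P : ↥(lev k i K n), ivSet (P : ℝ × ℝ)

def Bset (k : ℕ) (ch : ℝ × ℝ → Bool) (i : ℕ) (K : ℝ × ℝ) (n : ℕ) : Set ℝ :=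
  ⋃ P : ↥(lev k i K n), ivSet (IJ k ch (mid (P : ℝ × ℝ)))

lemma lev_finite (k i : ℕ) (K : ℝ × ℝ) (n : ℕ) : (lev k i K n).Finite :=
  (Kfam_finite (i+n)).subset (fun _ h => h.1)

instance lev_countable (k i : ℕ) (K : ℝ × ℝ) (n : ℕ) : Countable ↥(lev k i K n) :=
  (lev_finite k i K n).countable.to_subtype

lemma lev_zero (hk : 1 ≤ k) {i : ℕ} {K : ℝ × ℝ} (hK : K ∈ Kfam k i) :
    lev k i K 0 = {K} := by
  ext P
  simp only [lev, Set.mem_setOf_eq, Set.mem_singleton_iff]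
  constructor
  · rintro ⟨hP, hsub⟩
    by_contra hne
    have hdisj := Kfam_pairwise_disjoint hk i P hP K hK hne
    have hP1 : P.1 ∈ ivSet P := by
      simp only [ivSet, Set.mem_Ico]
      exact ⟨le_refl _, Kfam_lt hk hP⟩
    exact hdisj.ne_of_mem hP1 (hsub hP1) rfl
  · rintro rfl
    exact ⟨hK, subset_rfl⟩

lemma Aset_zero (hk : 1 ≤ k) {i : ℕ} {K : ℝ × ℝ} (hK : K ∈ Kfam k i) :
    Aset k i K 0 = ivSet K := by
  unfold Aset
  rw [lev_zero hk hK]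
  ext x
  simp

lemma lev_disjoint (hk : 1 ≤ k) (k' i : ℕ) (K : ℝ × ℝ) (n : ℕ) :
    Pairwise (Function.onFun Disjoint (fun P : ↥(lev k i K n) => ivSet (P : ℝ × ℝ))) := by
  intro P Q hne
  exact Kfam_pairwise_disjoint hk _ _ P.2.1 _ Q.2.1 (fun h => hne (Subtype.ext h))

lemma Aset_succ (hk : 1 ≤ k) {i : ℕ} {K : ℝ × ℝ} (hK : K ∈ Kfam k i) (n : ℕ) :
    Aset k i K (n+1) = ⋃ P : ↥(lev k i K n), ivSet (mid (P : ℝ × ℝ)) := by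
  apply Set.Subset.antisymm
  · rintro x hx
    obtain ⟨Q, hQ⟩ := Set.mem_iUnion.mp hx
    obtain ⟨hQmem, hQsub⟩ := Q.2
    obtain ⟨P, hP, hPsub⟩ := Kfam_succ_subset_mid hk (by exact hQmem : (Q:ℝ×ℝ) ∈ Kfam k ((i+n)+1))
    have hPK : ivSet P ⊆ ivSet K := by
      rcases Kfam_nested hk (Nat.le_add_right i n) hK hP with h | h
      · exact h
      · exfalso
        exact h.ne_of_mem (hPsub hQ |> mid_subset) (hQsub hQ) rfl
    exact Set.mem_iUnion.mpr ⟨⟨P, hP, hPK⟩, hPsub hQ⟩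
  · rintro x hx
    obtain ⟨P, hP⟩ := Set.mem_iUnion.mp hx
    obtain ⟨hPmem, hPsub⟩ := P.2
    rw [mid_eq_union_children hk hPmem] at hP
    simp only [Set.mem_iUnion, Finset.mem_range] at hP
    obtain ⟨j, hj, hxj⟩ := hP
    refine Set.mem_iUnion.mpr ⟨⟨_, child_mem hPmem hj, ?_⟩, hxj⟩
    exact ((child_subset_mid hk hPmem hj).trans mid_subset).trans hPsub

lemma Aset_antitone (hk : 1 ≤ k) {i : ℕ} {K : ℝ × ℝ} (hK : K ∈ Kfam k i) (n : ℕ) :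
    Aset k i K (n+1) ⊆ Aset k i K n := by
  rw [Aset_succ hk hK n]
  apply Set.iUnion_mono
  intro P
  exact mid_subset

lemma Aset_measurable (k i : ℕ) (K : ℝ × ℝ) (n : ℕ) : MeasurableSet (Aset k i K n) :=
  MeasurableSet.iUnion (fun _ => measurableSet_Ico)

lemma Bset_measurable (k : ℕ) (ch : ℝ × ℝ → Bool) (i : ℕ) (K : ℝ × ℝ) (n : ℕ) :
    MeasurableSet (Bset k ch i K n) := by
  apply MeasurableSet.iUnion
  intro P
  unfold IJ
  split <;> exact measurableSet_Ico

lemma vol_Aset_tsum (hk : 1 ≤ k) (i : ℕ) (K : ℝ × ℝ) (n : ℕ) :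
    volume (Aset k i K n) = ∑' P : ↥(lev k i K n), ENNReal.ofReal (len (P : ℝ × ℝ)) := by
  unfold Aset
  rw [measure_iUnion (lev_disjoint hk k i K n) (fun _ => measurableSet_Ico)]
  congr 1
  funext P
  rw [show ivSet (P : ℝ × ℝ) = Set.Ico (P : ℝ × ℝ).1 (P : ℝ × ℝ).2 from rfl, Real.volume_Ico]
  rfl

lemma vol_Aset (hk : 1 ≤ k) {i : ℕ} {K : ℝ × ℝ} (hK : K ∈ Kfam k i) (n : ℕ) :
    volume (Aset k i K n) = ENNReal.ofReal (((3:ℝ)⁻¹)^n * len K) := by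
  induction n with
  | zero =>
    rw [Aset_zero hk hK]
    simp only [pow_zero, one_mul, ivSet]
    rw [Real.volume_Ico]
    rfl
  | succ n ih =>
    have hmid_disj : Pairwise (Function.onFun Disjoint
        (fun P : ↥(lev k i K n) => ivSet (mid (P : ℝ × ℝ)))) := by
      intro P Q hne
      exact Set.disjoint_of_subset mid_subset mid_subset (lev_disjoint hk k i K n hne)
    rw [Aset_succ hk hK n, measure_iUnion hmid_disj (fun _ => measurableSet_Ico)]
    have h1 : ∀ P : ↥(lev k i K n), volume (ivSet (mid (P : ℝ × ℝ)))
        = ENNReal.ofReal (len (P : ℝ × ℝ)) * ENNReal.ofReal (3:ℝ)⁻¹ := by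
      intro P
      rw [show ivSet (mid (P : ℝ × ℝ)) = Set.Ico (mid (P : ℝ × ℝ)).1 (mid (P : ℝ × ℝ)).2 from rfl,
        Real.volume_Ico]
      rw [← ENNReal.ofReal_mul (by
        have := len_Kfam_pos hk P.2.1
        exact le_of_lt this)]
      congr 1
      have := len_mid (P : ℝ × ℝ)
      simp only [len] at this ⊢
      rw [this]; ring
    have hL := (len_Kfam_pos hk hK).le
    rw [tsum_congr h1, ENNReal.tsum_mul_right, ← vol_Aset_tsum hk i K n, ih]
    rw [← ENNReal.ofReal_mul (mul_nonneg (by positivity) hL)]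
    congr 1
    rw [pow_succ]
    ring

lemma vol_Bset (hk : 1 ≤ k) (ch : ℝ × ℝ → Bool) {i : ℕ} {K : ℝ × ℝ} (hK : K ∈ Kfam k i) (n : ℕ) :
    volume (Bset k ch i K n)
      = ENNReal.ofReal (((3:ℝ)^k)⁻¹ * ((3:ℝ)⁻¹)^n * len K) := by
  have hIJ_disj : Pairwise (Function.onFun Disjoint
      (fun P : ↥(lev k i K n) => ivSet (IJ k ch (mid (P : ℝ × ℝ))))) := by
    intro P Q hne
    exact Set.disjoint_of_subset (IJ_subset hk P.2.1) (IJ_subset hk Q.2.1)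
      (lev_disjoint hk k i K n hne)
  unfold Bset
  rw [measure_iUnion hIJ_disj (fun P => by unfold IJ; split <;> exact measurableSet_Ico)]
  have h1 : ∀ P : ↥(lev k i K n), volume (ivSet (IJ k ch (mid (P : ℝ × ℝ))))
      = ENNReal.ofReal (len (P : ℝ × ℝ)) * ENNReal.ofReal ((3:ℝ)^k)⁻¹ := by
    intro P
    have hlen := len_IJ (ch := ch) hk (P : ℝ × ℝ)
    have h2 : volume (ivSet (IJ k ch (mid (P : ℝ × ℝ))))
        = ENNReal.ofReal (len (IJ k ch (mid (P : ℝ × ℝ)))) := by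
      rw [show ivSet (IJ k ch (mid (P:ℝ×ℝ))) = Set.Ico (IJ k ch (mid (P:ℝ×ℝ))).1 (IJ k ch (mid (P:ℝ×ℝ))).2 from rfl,
        Real.volume_Ico]
      rfl
    rw [h2, hlen, ← ENNReal.ofReal_mul (le_of_lt (len_Kfam_pos hk P.2.1))]
    congr 1; ring
  have hL := (len_Kfam_pos hk hK).le
  rw [tsum_congr h1, ENNReal.tsum_mul_right, ← vol_Aset_tsum hk i K n, vol_Aset hk hK n]
  rw [← ENNReal.ofReal_mul (mul_nonneg (by positivity) hL)]
  congr 1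
  ring
lemma Bset_subset (hk : 1 ≤ k) (ch : ℝ × ℝ → Bool) {i : ℕ} {K : ℝ × ℝ} (hK : K ∈ Kfam k i) (n : ℕ) :
    Bset k ch i K n ⊆ Aset k i K n \ Aset k i K (n+1) := by
  intro x hx
  obtain ⟨P, hP⟩ := Set.mem_iUnion.mp hx
  have hxP : x ∈ ivSet (P : ℝ × ℝ) := IJ_subset hk P.2.1 hP
  constructor
  · exact Set.mem_iUnion.mpr ⟨P, hxP⟩
  · rw [Aset_succ hk hK n]
    intro hmem
    obtain ⟨Q, hQ⟩ := Set.mem_iUnion.mp hmem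
    have hQP : Q = P := by
      by_contra hne
      exact (lev_disjoint hk k i K n hne).ne_of_mem (mid_subset hQ) hxP rfl
    subst hQP
    exact (IJ_disj_mid k ch (Q : ℝ × ℝ)).ne_of_mem hP hQ rfl

lemma pointwise_u (hk : 1 ≤ k) (ch : ℝ × ℝ → Bool) {u : ℝ → ℝ} {c : ℕ → ℝ}
    (hueq : ∀ m, ∀ P ∈ Kfam k m, ∀ x ∈ ivSet P, x ∉ ivSet (mid P) →
      u x = Set.indicator (ivSet (IJ k ch (mid P))) (fun _ => c m) x)
    {i : ℕ} {K : ℝ × ℝ} (hK : K ∈ Kfam k i) (n : ℕ) :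
    ∀ x ∈ Aset k i K n \ Aset k i K (n+1),
      u x = Set.indicator (Bset k ch i K n) (fun _ => c (i+n)) x := by
  rintro x ⟨hx1, hx2⟩
  obtain ⟨P, hP⟩ := Set.mem_iUnion.mp hx1
  have hxnm : x ∉ ivSet (mid (P : ℝ × ℝ)) := by
    intro hmem
    exact hx2 ((Aset_succ hk hK n) ▸ Set.mem_iUnion.mpr ⟨P, hmem⟩)
  have heq := hueq (i+n) (P : ℝ × ℝ) P.2.1 x hP hxnm
  by_cases hxI : x ∈ ivSet (IJ k ch (mid (P : ℝ × ℝ)))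
  · rw [Set.indicator_of_mem hxI] at heq
    have hxB : x ∈ Bset k ch i K n := Set.mem_iUnion.mpr ⟨P, hxI⟩
    rw [Set.indicator_of_mem hxB, heq]
  · rw [Set.indicator_of_notMem hxI] at heq
    have hxB : x ∉ Bset k ch i K n := by
      intro hmem
      obtain ⟨Q, hQ⟩ := Set.mem_iUnion.mp hmem
      have hQP : Q = P := by
        by_contra hne
        exact (lev_disjoint hk k i K n hne).ne_of_mem (IJ_subset hk Q.2.1 hQ) hP rfl
      exact hxI (hQP ▸ hQ)
    rw [Set.indicator_of_notMem hxB, heq]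

lemma vol_iInter (hk : 1 ≤ k) {i : ℕ} {K : ℝ × ℝ} (hK : K ∈ Kfam k i) :
    volume (⋂ n, Aset k i K n) = 0 := by
  have h : ∀ n, volume (⋂ m, Aset k i K m) ≤ ENNReal.ofReal (((3:ℝ)⁻¹)^n * len K) :=
    fun n => le_trans (measure_mono (Set.iInter_subset _ n)) (le_of_eq (vol_Aset hk hK n))
  have htr : Tendsto (fun n : ℕ => ((3:ℝ)⁻¹)^n * len K) atTop (nhds 0) := by
    have := (tendsto_pow_atTop_nhds_zero_of_lt_one (by norm_num : (0:ℝ) ≤ 3⁻¹)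
      (by norm_num : (3:ℝ)⁻¹ < 1)).mul_const (len K)
    simpa using this
  have htend : Tendsto (fun n : ℕ => ENNReal.ofReal (((3:ℝ)⁻¹)^n * len K)) atTop (nhds 0) := by
    have := (ENNReal.continuous_ofReal.tendsto 0).comp htr
    simpa only [ENNReal.ofReal_zero, Function.comp_def] using this
  exact le_antisymm (ge_of_tendsto' htend h) zero_le

lemma Aset_le (hk : 1 ≤ k) {i : ℕ} {K : ℝ × ℝ} (hK : K ∈ Kfam k i) :
    ∀ {m n : ℕ}, m ≤ n → Aset k i K n ⊆ Aset k i K m := by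
  intro m n h
  induction n with
  | zero => rw [Nat.le_zero.mp h]
  | succ n ih =>
    rcases Nat.lt_or_ge m (n+1) with h' | h'
    · exact (Aset_antitone hk hK n).trans (ih (by omega))
    · rw [Nat.le_antisymm h h']

lemma Aset_decomp (hk : 1 ≤ k) {i : ℕ} {K : ℝ × ℝ} (hK : K ∈ Kfam k i) :
    Aset k i K 0 = (⋃ n, (Aset k i K n \ Aset k i K (n+1))) ∪ (⋂ n, Aset k i K n) := by
  classical
  apply Set.Subset.antisymm
  · intro x hx0
    by_cases hall : ∀ n, x ∈ Aset k i K n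
    · exact Or.inr (Set.mem_iInter.mpr hall)
    · push_neg at hall
      have hex : ∃ n, x ∉ Aset k i K n := hall
      have hfind := Nat.find_spec hex
      have hpos : 0 < Nat.find hex := by
        rcases Nat.eq_zero_or_pos (Nat.find hex) with h | h
        · exact absurd (h ▸ hfind) (by simp [hx0])
        · exact h
      refine Or.inl (Set.mem_iUnion.mpr ⟨Nat.find hex - 1, ?_, ?_⟩)
      · have := Nat.find_min hex (m := Nat.find hex - 1) (by omega)
        simpa using this
      · rw [show Nat.find hex - 1 + 1 = Nat.find hex from by omega]
        exact hfind
  · rintro x (hx | hx)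
    · obtain ⟨n, hn⟩ := Set.mem_iUnion.mp hx
      exact Aset_le hk hK (Nat.zero_le n) hn.1
    · exact Set.mem_iInter.mp hx 0

lemma diff_disjoint (hk : 1 ≤ k) {i : ℕ} {K : ℝ × ℝ} (hK : K ∈ Kfam k i) :
    Pairwise (Function.onFun Disjoint (fun n => Aset k i K n \ Aset k i K (n+1))) := by
  have key : ∀ m n, m < n → Disjoint (Aset k i K m \ Aset k i K (m+1)) (Aset k i K n \ Aset k i K (n+1)) := by
    intro m n hmn
    rw [Set.disjoint_left]
    rintro x ⟨_, hx2⟩ ⟨hx3, _⟩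
    exact hx2 (Aset_le hk hK (by omega : m + 1 ≤ n) hx3)
  intro m n hne
  rcases Nat.lt_or_ge m n with h | h
  · exact key m n h
  · exact (key n m (by omega)).symm

lemma lintegral_u (hk : 1 ≤ k) (ch : ℝ × ℝ → Bool) {u : ℝ → ℝ} {c : ℕ → ℝ}
    (hc : ∀ m, 0 ≤ c m)
    (hueq : ∀ m, ∀ P ∈ Kfam k m, ∀ x ∈ ivSet P, x ∉ ivSet (mid P) →
      u x = Set.indicator (ivSet (IJ k ch (mid P))) (fun _ => c m) x)
    {i : ℕ} {K : ℝ × ℝ} (hK : K ∈ Kfam k i) :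
    ∫⁻ x in ivSet K, ENNReal.ofReal (u x)
      = ∑' n, ENNReal.ofReal (c (i+n)) * volume (Bset k ch i K n) := by
  rw [← Aset_zero hk hK, Aset_decomp hk hK]
  rw [lintegral_union (MeasurableSet.iInter (fun n => Aset_measurable k i K n)) (by
    rw [Set.disjoint_left]
    rintro x hx hx2
    obtain ⟨n, hn⟩ := Set.mem_iUnion.mp hx
    exact hn.2 (Set.mem_iInter.mp hx2 (n+1)))]
  rw [setLIntegral_measure_zero _ _ (vol_iInter hk hK), add_zero]
  rw [lintegral_iUnion (fun n => (Aset_measurable k i K n).diff (Aset_measurable k i K (n+1)))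
    (diff_disjoint hk hK)]
  congr 1
  funext n
  have hcong : ∫⁻ x in Aset k i K n \ Aset k i K (n+1), ENNReal.ofReal (u x)
      = ∫⁻ x in Aset k i K n \ Aset k i K (n+1),
          (Bset k ch i K n).indicator (fun _ => ENNReal.ofReal (c (i+n))) x := by
    apply setLIntegral_congr_fun_ae ((Aset_measurable k i K n).diff (Aset_measurable k i K (n+1)))
    apply ae_of_all
    intro x hx
    rw [pointwise_u hk ch hueq hK n x hx]
    by_cases hB : x ∈ Bset k ch i K n
    · rw [Set.indicator_of_mem hB, Set.indicator_of_mem hB]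
    · rw [Set.indicator_of_notMem hB, Set.indicator_of_notMem hB, ENNReal.ofReal_zero]
  rw [hcong, lintegral_indicator (Bset_measurable k ch i K n) _, setLIntegral_const,
    Measure.restrict_apply (Bset_measurable k ch i K n),
    Set.inter_eq_left.mpr (Bset_subset hk ch hK n)]
lemma mass_formula (hk : 1 ≤ k) (ch : ℝ × ℝ → Bool) {u : ℝ → ℝ} {c0 r : ℝ}
    (hc0 : 0 < c0) (hr : 0 < r) (hr3 : r < 3)
    (hmeas : Measurable u) (hnn : ∀ x, 0 ≤ u x)
    (hueq : ∀ m, ∀ P ∈ Kfam k m, ∀ x ∈ ivSet P, x ∉ ivSet (mid P) →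
      u x = Set.indicator (ivSet (IJ k ch (mid P))) (fun _ => c0 * r ^ m) x)
    {i : ℕ} {K : ℝ × ℝ} (hK : K ∈ Kfam k i) :
    mass u K = c0 * r^i * ((3:ℝ)^k)⁻¹ * (3/(3-r)) * len K := by
  have hL := (len_Kfam_pos hk hK).le
  have hcnn : ∀ m, 0 ≤ c0 * r ^ m := fun m => by positivity
  have hr3' : (0:ℝ) < 3 - r := by linarith
  unfold mass
  rw [integral_eq_lintegral_of_nonneg_ae (ae_of_all _ hnn) hmeas.aestronglyMeasurable]
  rw [lintegral_u hk ch hcnn hueq hK]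
  have hterm : ∀ n : ℕ, ENNReal.ofReal (c0 * r ^ (i+n)) * volume (Bset k ch i K n)
      = ENNReal.ofReal ((c0 * r^i * ((3:ℝ)^k)⁻¹ * len K) * (r/3)^n) := by
    intro n
    rw [vol_Bset hk ch hK n, ← ENNReal.ofReal_mul (hcnn _)]
    congr 1
    rw [pow_add, div_eq_mul_inv r 3, mul_pow]
    ring
  rw [tsum_congr hterm]
  have hsum : Summable (fun n : ℕ => (c0 * r^i * ((3:ℝ)^k)⁻¹ * len K) * (r/3)^n) := by
    apply Summable.mul_left
    apply summable_geometric_of_lt_one (by positivity)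
    rw [div_lt_one (by norm_num : (0:ℝ) < 3)]
    exact hr3
  rw [← ENNReal.ofReal_tsum_of_nonneg (fun n => by positivity) hsum]
  rw [ENNReal.toReal_ofReal (tsum_nonneg (fun n => by positivity))]
  rw [tsum_mul_left, tsum_geometric_of_lt_one (by positivity) (by
    rw [div_lt_one (by norm_num : (0:ℝ) < 3)]; exact hr3)]
  have hinv : (1 - r/3)⁻¹ = 3/(3-r) := by
    rw [show (1 : ℝ) - r/3 = (3-r)/3 by ring, inv_div]
  rw [hinv]
  ring

lemma mass_nonneg_of (hk : 1 ≤ k) {u : ℝ → ℝ} (hnn : ∀ x, 0 ≤ u x) (K : ℝ × ℝ) :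
    0 ≤ mass u K :=
  MeasureTheory.integral_nonneg hnn

lemma sum_lev_len (hk : 1 ≤ k) {i : ℕ} {K : ℝ × ℝ} (hK : K ∈ Kfam k i) (n : ℕ) :
    ∑' P : ↥(lev k i K n), len (P : ℝ × ℝ) = ((3:ℝ)⁻¹)^n * len K := by
  have h1 := vol_Aset_tsum hk i K n
  rw [vol_Aset hk hK n] at h1
  have hlen_nn : ∀ P : ↥(lev k i K n), 0 ≤ len (P:ℝ×ℝ) := fun P => (len_Kfam_pos hk P.2.1).le
  have hL := (len_Kfam_pos hk hK).le
  calc ∑' P : ↥(lev k i K n), len (P:ℝ×ℝ)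
      = ∑' P : ↥(lev k i K n), (ENNReal.ofReal (len (P:ℝ×ℝ))).toReal := by
        apply tsum_congr; intro P; rw [ENNReal.toReal_ofReal (hlen_nn P)]
    _ = (∑' P : ↥(lev k i K n), ENNReal.ofReal (len (P:ℝ×ℝ))).toReal :=
        (ENNReal.tsum_toReal_eq (fun P => ENNReal.ofReal_ne_top)).symm
    _ = (ENNReal.ofReal (((3:ℝ)⁻¹)^n * len K)).toReal := by rw [h1]
    _ = ((3:ℝ)⁻¹)^n * len K := ENNReal.toReal_ofReal (mul_nonneg (by positivity) hL)

lemma pow_inv_inj (hk : 1 ≤ k) {m n : ℕ} (h : (((3:ℝ)^k)⁻¹)^m = (((3:ℝ)^k)⁻¹)^n) : m = n := by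
  have hb0 : (0:ℝ) < ((3:ℝ)^k)⁻¹ := by positivity
  have hb1 : ((3:ℝ)^k)⁻¹ < 1 := by
    rw [inv_lt_one_iff₀]
    right
    calc (1:ℝ) < 3^1 := by norm_num
    _ ≤ 3^k := by apply pow_le_pow_right₀ (by norm_num) hk
  have := (pow_right_strictAnti₀ hb0 hb1).injective h
  exact this
lemma mem_S_iff (hk : 1 ≤ k) {i : ℕ} {K : ℝ × ℝ} (hK : K ∈ Kfam k i) {K' : ℝ × ℝ} :
    (K' ∈ KK k ∧ ivSet K' ⊆ ivSet K) ↔ ∃ n, K' ∈ lev k i K n := by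
  constructor
  · rintro ⟨hKK, hsub⟩
    obtain ⟨j, hj⟩ := Set.mem_iUnion.mp hKK
    have hK'1 : K'.1 ∈ ivSet K' := by
      simp only [ivSet, Set.mem_Ico]
      exact ⟨le_refl _, Kfam_lt hk hj⟩
    have hij : i ≤ j := by
      by_contra hlt
      push_neg at hlt
      rcases Kfam_nested hk hlt.le hj hK with h | h
      · -- ivSet K ⊆ ivSet K'
        have hEq : ivSet K' = ivSet K := Set.Subset.antisymm hsub h
        have h1 : K'.1 = K.1 ∧ K'.2 = K.2 := by
          have hne : K'.1 < K'.2 := Kfam_lt hk hj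
          have hne2 : K.1 < K.2 := Kfam_lt hk hK
          rw [ivSet, ivSet, Set.Ico_eq_Ico_iff (Or.inl hne)] at hEq
          exact hEq
        have hlen : len K' = len K := by simp only [len, h1.1, h1.2]
        rw [len_Kfam hk j K' hj, len_Kfam hk i K hK] at hlen
        exact absurd (pow_inv_inj hk hlen) (by omega)
      · exact absurd rfl (h.ne_of_mem (hsub hK'1) hK'1)
    refine ⟨j - i, ⟨?_, hsub⟩⟩
    rw [show i + (j - i) = j from by omega]
    exact hj
  · rintro ⟨n, hP, hsub⟩
    exact ⟨Set.mem_iUnion.mpr ⟨i+n, hP⟩, hsub⟩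

lemma lev_unique (hk : 1 ≤ k) {i : ℕ} {K : ℝ × ℝ} {K' : ℝ × ℝ} {n n' : ℕ}
    (h : K' ∈ lev k i K n) (h' : K' ∈ lev k i K n') : n = n' := by
  have h1 := len_Kfam hk _ K' h.1
  have h2 := len_Kfam hk _ K' h'.1
  have := pow_inv_inj hk (h1.symm.trans h2)
  omega

lemma sum_mass_eq (hk : 1 ≤ k) (ch : ℝ × ℝ → Bool) {u : ℝ → ℝ} {c0 r : ℝ}
    (hc0 : 0 < c0) (hr : 0 < r) (hr3 : r < 3)
    (hmeas : Measurable u) (hnn : ∀ x, 0 ≤ u x)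
    (hueq : ∀ m, ∀ P ∈ Kfam k m, ∀ x ∈ ivSet P, x ∉ ivSet (mid P) →
      u x = Set.indicator (ivSet (IJ k ch (mid P))) (fun _ => c0 * r ^ m) x)
    {i : ℕ} {K : ℝ × ℝ} (hK : K ∈ Kfam k i) :
    (∑' K' : ↥{K' | K' ∈ KK k ∧ ivSet K' ⊆ ivSet K}, mass u (K' : ℝ × ℝ))
      = (3/(3-r)) * mass u K := by
  have hr3' : (0:ℝ) < 3 - r := by linarith
  have hr31 : r/3 < 1 := by rw [div_lt_one (by norm_num : (0:ℝ) < 3)]; exact hr3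
  have hLpos := len_Kfam_pos hk hK
  set S : Set (ℝ × ℝ) := {K' | K' ∈ KK k ∧ ivSet K' ⊆ ivSet K} with hS
  -- the bijection
  have hmem : ∀ (x : Σ n, ↥(lev k i K n)), ((x.2 : ℝ × ℝ)) ∈ S := by
    rintro ⟨n, P⟩
    exact (mem_S_iff hk hK).mpr ⟨n, P.2⟩
  let f : (Σ n, ↥(lev k i K n)) → ↥S := fun x => ⟨(x.2 : ℝ × ℝ), hmem x⟩
  have hbij : Function.Bijective f := by
    constructor
    · rintro ⟨n, P⟩ ⟨n', P'⟩ hfe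
      have hval : (P : ℝ × ℝ) = (P' : ℝ × ℝ) := congrArg Subtype.val hfe
      have hnn' : n = n' := lev_unique hk P.2 (hval ▸ P'.2)
      subst hnn'
      have : P = P' := Subtype.ext hval
      rw [this]
    · rintro ⟨K', hK'⟩
      obtain ⟨n, hn⟩ := (mem_S_iff hk hK).mp hK'
      exact ⟨⟨n, ⟨K', hn⟩⟩, rfl⟩
  let e : (Σ n, ↥(lev k i K n)) ≃ ↥S := Equiv.ofBijective f hbij
  have he : ∀ x : Σ n, ↥(lev k i K n), mass u ((e x : ↥S) : ℝ × ℝ) = mass u ((x.2 : ℝ × ℝ)) :=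
    fun x => rfl
  rw [← Equiv.tsum_eq e (fun K' : ↥S => mass u (K' : ℝ × ℝ))]
  have hmass : ∀ (n : ℕ) (P : ↥(lev k i K n)),
      mass u (P : ℝ × ℝ) = c0 * r^(i+n) * ((3:ℝ)^k)⁻¹ * (3/(3-r)) * len (P : ℝ × ℝ) :=
    fun n P => mass_formula hk ch hc0 hr hr3 hmeas hnn hueq P.2.1
  -- inner sums
  have hinner : ∀ n : ℕ, (∑' P : ↥(lev k i K n), mass u (P : ℝ × ℝ))
      = mass u K * (r/3)^n := by
    intro n
    calc (∑' P : ↥(lev k i K n), mass u (P : ℝ × ℝ))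
        = ∑' P : ↥(lev k i K n),
            (c0 * r^(i+n) * ((3:ℝ)^k)⁻¹ * (3/(3-r))) * len (P : ℝ × ℝ) := by
          apply tsum_congr; intro P; rw [hmass n P]
      _ = (c0 * r^(i+n) * ((3:ℝ)^k)⁻¹ * (3/(3-r))) * (((3:ℝ)⁻¹)^n * len K) := by
          rw [tsum_mul_left, sum_lev_len hk hK n]
      _ = mass u K * (r/3)^n := by
          rw [mass_formula hk ch hc0 hr hr3 hmeas hnn hueq hK]
          rw [pow_add, div_eq_mul_inv r 3, mul_pow]
          ring
  have hsummable : Summable (fun x : Σ n, ↥(lev k i K n) => mass u ((x.2 : ℝ × ℝ))) := by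
    apply (summable_sigma_of_nonneg ?_).mpr
    constructor
    · intro n
      haveI : Finite ↥(lev k i K n) := (lev_finite k i K n).to_subtype
      exact Summable.of_finite
    · apply Summable.congr (((summable_geometric_of_lt_one (by positivity) hr31).mul_left
        (mass u K)))
      intro n
      exact (hinner n).symm
    · rintro ⟨n, P⟩
      rw [hmass n P]
      have := (len_Kfam_pos hk P.2.1).le
      positivity
  have := Summable.tsum_sigma (f := fun x : Σ n, ↥(lev k i K n) => mass u ((x.2 : ℝ × ℝ))) hsummable
  calc (∑' x : Σ n, ↥(lev k i K n), mass u ((e x : ↥S) : ℝ × ℝ))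
      = ∑' x : Σ n, ↥(lev k i K n), mass u ((x.2 : ℝ × ℝ)) := by rfl
    _ = ∑' n, ∑' P : ↥(lev k i K n), mass u ((P : ℝ × ℝ)) := this
    _ = ∑' n, mass u K * (r/3)^n := tsum_congr hinner
    _ = mass u K * (1 - r/3)⁻¹ := by
        rw [tsum_mul_left, tsum_geometric_of_lt_one (by positivity) hr31]
    _ = (3/(3-r)) * mass u K := by
        rw [show (1:ℝ) - r/3 = (3-r)/3 by ring, inv_div]
        ring
end Struct

/-- Lemma 3.5 of the paper (packing of `𝐊` below a fixed `K ∈ 𝐊`). -/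
theorem statement4 (p : ℝ) (hp : 1 < p) :
    ∃ c C : ℝ, 0 < c ∧ c ≤ C ∧ ∀ k : ℕ, 3000 < k → ∀ ch : ℝ × ℝ → Bool, ∀ K ∈ KK k,
      (c * ((3 : ℝ) ^ k * mass (wgt k ch) K) ≤
          (∑' K' : ↥{K' | K' ∈ KK k ∧ ivSet K' ⊆ ivSet K}, mass (wgt k ch) (K' : ℝ × ℝ)) ∧
        (∑' K' : ↥{K' | K' ∈ KK k ∧ ivSet K' ⊆ ivSet K}, mass (wgt k ch) (K' : ℝ × ℝ)) ≤
          C * ((3 : ℝ) ^ k * mass (wgt k ch) K)) ∧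
      (c * mass (sgm p k ch) K ≤
          (∑' K' : ↥{K' | K' ∈ KK k ∧ ivSet K' ⊆ ivSet K}, mass (sgm p k ch) (K' : ℝ × ℝ)) ∧
        (∑' K' : ↥{K' | K' ∈ KK k ∧ ivSet K' ⊆ ivSet K}, mass (sgm p k ch) (K' : ℝ × ℝ)) ≤
          C * mass (sgm p k ch) K) := by
  refine ⟨1/3, 3/2, by norm_num, by norm_num, ?_⟩
  intro k hk3000 ch K hK
  have hk : 1 ≤ k := by omega
  obtain ⟨i, hKi⟩ := Set.mem_iUnion.mp hK
  have hL := len_Kfam_pos hk hKi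
  have hN1 : (1:ℝ) ≤ (3:ℝ)^(k-1) := one_le_pow₀ (by norm_num : (1:ℝ) ≤ 3)
  have hNk : (3:ℝ)^k = (3:ℝ)^(k-1) * 3 := (pow_pred hk).symm
  have ha0 : 0 < abase k := abase_pos
  have ha1 : 1 < abase k := by
    unfold abase
    rw [lt_div_iff₀ (by positivity), hNk]
    nlinarith
  have ha3 : abase k < 3 := by
    unfold abase
    rw [div_lt_iff₀ (by positivity), hNk]
    nlinarith
  have hR : 3/(3 - abase k) = (3:ℝ)^(k-1) + 1 := by
    have h3a : 3 - abase k = 3/((3:ℝ)^(k-1)+1) := by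
      unfold abase
      rw [hNk]
      field_simp
      ring
    rw [h3a]
    rw [div_div_eq_mul_div]
    field_simp
  -- the weight w
  have hueq_w : ∀ m, ∀ P ∈ Kfam k m, ∀ x ∈ ivSet P, x ∉ ivSet (mid P) →
      wgt k ch x = Set.indicator (ivSet (IJ k ch (mid P)))
        (fun _ => (abase k) * (abase k) ^ m) x := by
    intro m P hP x hx1 hx2
    rw [wgt_eq_on hk hP hx1 hx2]
    congr 1
    funext _
    rw [pow_succ]
    ring
  have hsum_w := sum_mass_eq hk ch ha0 ha0 ha3 (wgt_measurable k ch) (wgt_nonneg k ch)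
    hueq_w hKi
  have hMw : 0 < mass (wgt k ch) K := by
    rw [mass_formula hk ch ha0 ha0 ha3 (wgt_measurable k ch) (wgt_nonneg k ch) hueq_w hKi]
    have h3a : (0:ℝ) < 3 - abase k := by linarith
    exact mul_pos (mul_pos (mul_pos (mul_pos ha0 (pow_pos ha0 i))
      (by positivity)) (div_pos (by norm_num) h3a)) hL
  -- the weight σ
  set q := (abase k) ^ (1 - p) with hqdef
  have hq0 : 0 < q := Real.rpow_pos_of_pos ha0 _
  have hq1 : q < 1 := Real.rpow_lt_one_of_one_lt_of_neg ha1 (by linarith)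
  have hueq_s : ∀ m, ∀ P ∈ Kfam k m, ∀ x ∈ ivSet P, x ∉ ivSet (mid P) →
      sgm p k ch x = Set.indicator (ivSet (IJ k ch (mid P)))
        (fun _ => q * q ^ m) x := by
    intro m P hP x hx1 hx2
    rw [sgm_eq_on hp hk hP hx1 hx2]
    congr 1
    funext _
    rw [pow_succ]
    ring
  have hsum_s := sum_mass_eq hk ch hq0 hq0 (by linarith) (sgm_measurable p k ch)
    (sgm_nonneg p k ch) hueq_s hKi
  have hMs : 0 < mass (sgm p k ch) K := by
    rw [mass_formula hk ch hq0 hq0 (by linarith : q < 3) (sgm_measurable p k ch)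
      (sgm_nonneg p k ch) hueq_s hKi]
    have h3q : (0:ℝ) < 3 - q := by linarith
    exact mul_pos (mul_pos (mul_pos (mul_pos hq0 (pow_pos hq0 i))
      (by positivity)) (div_pos (by norm_num) h3q)) hL
  constructor
  · rw [hsum_w, hR]
    constructor
    · rw [hNk]
      nlinarith [hMw.le]
    · rw [hNk]
      nlinarith [hMw.le, hN1]
  · rw [hsum_s]
    have hr1 : (1:ℝ) ≤ 3/(3-q) := by
      rw [le_div_iff₀ (by linarith)]
      linarith
    have hr2 : 3/(3-q) ≤ 3/2 := by
      rw [div_le_div_iff₀ (by linarith) (by norm_num)]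
      linarith
    constructor
    · nlinarith [hMs.le, hr1]
    · nlinarith [hMs.le, hr2]

end RTpaper
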